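/- If an outcome W is not DF1, then there exists a project x_j ∉ W such that cover(W ∪ {x_j}) ≥ cover(W) + c(x_j), where cover is the total coverage function. -/

import Mathlib

open Finset

/-- Fractional feasibility for a single district with natural-valued welfare. -/
def FracFeasible {m : ℕ} (sw : Fin m → ℕ) (f : ℝ) (W : Finset (Fin m))
    (p : Fin m → ℝ) : Prop :=
  (∀ j, 0 ≤ p j ∧ p j ≤ 1) ∧ (∀ j ∈ W, p j = 0) ∧
    f ≤ (∑ j ∈ W, (sw j : ℝ)) + ∑ j, p j * (sw j : ℝ)

/-- Minimum cost of a feasible fractional completion for one district. -/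
noncomputable def resid {m : ℕ} (c : Fin m → ℝ) (sw : Fin m → ℕ) (f : ℝ)
    (W : Finset (Fin m)) : ℝ :=
  sInf ((fun p : Fin m → ℝ => ∑ j, p j * c j) '' {p | FracFeasible sw f W p})

/-- Total coverage of an outcome, summed over all districts. -/
noncomputable def coverTot {m k : ℕ} (c : Fin m → ℝ) (sw : Fin k → Fin m → ℕ)
    (f bd : Fin k → ℝ) (W : Finset (Fin m)) : ℝ :=
  ∑ i, (bd i - resid c (sw i) (f i) W)

/-- An outcome is district-fair up to one project. -/
def DF1 {m k : ℕ} (sw : Fin k → Fin m → ℕ) (f : Fin k → ℝ)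
    (W : Finset (Fin m)) : Prop :=
  ∀ i, f i ≤ (∑ j ∈ W, (sw i j : ℝ)) + (((Finset.univ \ W).sup (sw i) : ℕ) : ℝ)


open Finset

section Aux

variable {m : ℕ} (c : Fin m → ℝ) (sw : Fin m → ℕ) (f : ℝ)

lemma bddBelow_costs (W : Finset (Fin m)) (hc : ∀ j, 0 ≤ c j) :
    BddBelow ((fun p : Fin m → ℝ => ∑ j, p j * c j) '' {p | FracFeasible sw f W p}) := by
  refine ⟨0, ?_⟩
  rintro y ⟨p, hp, rfl⟩
  exact Finset.sum_nonneg fun j _ => mul_nonneg (hp.1 j).1 (hc j)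

lemma resid_le_cost (W : Finset (Fin m)) (hc : ∀ j, 0 ≤ c j) {p : Fin m → ℝ}
    (hp : FracFeasible sw f W p) : resid c sw f W ≤ ∑ j, p j * c j :=
  csInf_le (bddBelow_costs c sw f W hc) ⟨p, hp, rfl⟩

lemma sum_update_zero (p : Fin m → ℝ) (x : Fin m) (g : Fin m → ℝ) :
    ∑ j, Function.update p x 0 j * g j = (∑ j, p j * g j) - p x * g x := by
  rw [← Finset.sum_erase_add _ _ (mem_univ x), ← Finset.sum_erase_add univ (fun j => p j * g j) (mem_univ x)]
  rw [Function.update_self]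
  have : ∑ j ∈ univ.erase x, Function.update p x 0 j * g j
      = ∑ j ∈ univ.erase x, p j * g j := by
    refine Finset.sum_congr rfl fun j hj => ?_
    rw [Function.update_of_ne (Finset.ne_of_mem_erase hj)]
  rw [this]; ring

lemma update_feasible {W : Finset (Fin m)} {p : Fin m → ℝ} {x : Fin m}
    (hx : x ∉ W) (hp : FracFeasible sw f W p) :
    FracFeasible sw f (insert x W) (Function.update p x 0) := by
  obtain ⟨hb, hz, hle⟩ := hp
  refine ⟨fun j => ?_, fun j hj => ?_, ?_⟩
  · rcases eq_or_ne j x with rfl | h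
    · simp
    · rw [Function.update_of_ne h]; exact hb j
  · rcases eq_or_ne j x with rfl | h
    · simp
    · rw [Function.update_of_ne h]
      exact hz j ((Finset.mem_insert.1 hj).resolve_left h)
  · rw [Finset.sum_insert hx, sum_update_zero]
    have h1 : p x * (sw x : ℝ) ≤ (sw x : ℝ) := by
      nlinarith [(hb x).2, (Nat.cast_nonneg (sw x) : (0:ℝ) ≤ sw x), (hb x).1]
    linarith

lemma feasible_nonempty {W : Finset (Fin m)} {p : Fin m → ℝ}
    (hp : FracFeasible sw f ∅ p) :
    ∃ q, FracFeasible sw f W q := by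
  refine ⟨fun j => if j ∈ W then 0 else p j, fun j => ?_, fun j hj => by simp [hj], ?_⟩
  · by_cases h : j ∈ W <;> simp [h, (hp.1 j).1, (hp.1 j).2]
  · have hle := hp.2.2
    simp only [Finset.sum_empty, zero_add] at hle
    have key : ∑ j, p j * (sw j : ℝ)
        = (∑ j ∈ W, p j * (sw j : ℝ)) + ∑ j, (if j ∈ W then 0 else p j) * (sw j : ℝ) := by
      have : ∀ j, p j * (sw j : ℝ)
          = (if j ∈ W then p j * (sw j : ℝ) else 0) + (if j ∈ W then 0 else p j) * (sw j : ℝ) := by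
        intro j; by_cases h : j ∈ W <;> simp [h]
      rw [Finset.sum_congr rfl fun j _ => this j, Finset.sum_add_distrib,
        Finset.sum_ite_mem, Finset.univ_inter]
    have hWle : ∑ j ∈ W, p j * (sw j : ℝ) ≤ ∑ j ∈ W, (sw j : ℝ) := by
      refine Finset.sum_le_sum fun j _ => ?_
      nlinarith [(hp.1 j).2, (Nat.cast_nonneg (sw j) : (0:ℝ) ≤ sw j), (hp.1 j).1]
    linarith

end Aux

/-- if `W` is not DF1, some project's addition increases the
total coverage by at least its cost. -/
theorem non_DF1_coverage_increase
    {m k : ℕ} (c : Fin m → ℝ) (sw : Fin k → Fin m → ℕ) (f bd : Fin k → ℝ)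
    (hc : ∀ j, 0 ≤ c j) (hf : ∀ i, 0 ≤ f i)
    (hach : ∀ i, ∃ p, FracFeasible (sw i) (f i) ∅ p ∧ ∑ j, p j * c j ≤ bd i)
    (hwit : ∀ i (W : Finset (Fin m)), (∃ p, FracFeasible (sw i) (f i) W p) →
      ∃ p, FracFeasible (sw i) (f i) W p ∧
        (∑ j, p j * c j) = resid c (sw i) (f i) W ∧
        ∃ j₀, ∀ j, j ≠ j₀ → p j = 0 ∨ p j = 1)
    (W : Finset (Fin m)) (hW : ¬ DF1 sw f W) :
    ∃ x ∉ W, coverTot c sw f bd W + c x ≤ coverTot c sw f bd (insert x W) := by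
  -- extract the violating district
  rw [DF1] at hW
  push_neg at hW
  obtain ⟨i₀, hi₀⟩ := hW
  -- feasibility for every district and every W
  have hfeas : ∀ i (V : Finset (Fin m)), ∃ p, FracFeasible (sw i) (f i) V p := by
    intro i V
    obtain ⟨p, hp, -⟩ := hach i
    exact feasible_nonempty (sw i) (f i) hp
  -- optimal witness for the violating district
  obtain ⟨p, hpfeas, hpcost, j₀, hj₀⟩ := hwit i₀ W (hfeas i₀ W)
  -- there is a project fully used by the witness
  have hx : ∃ x, x ∉ W ∧ p x = 1 := by
    by_contra h
    push_neg at h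
    have hzero : ∀ j, j ≠ j₀ → p j = 0 := by
      intro j hj
      rcases hj₀ j hj with h0 | h1
      · exact h0
      · exfalso
        have hjW : j ∉ W := fun hjW => by
          have := hpfeas.2.1 j hjW; rw [this] at h1; norm_num at h1
        exact (h j hjW) h1
    have hsum : ∑ j, p j * ((sw i₀ j : ℝ)) = p j₀ * (sw i₀ j₀ : ℝ) :=
      Finset.sum_eq_single j₀ (fun j _ hj => by rw [hzero j hj, zero_mul])
        (fun h => absurd (mem_univ j₀) h)
    have hbound : p j₀ * (sw i₀ j₀ : ℝ) ≤ (((Finset.univ \ W).sup (sw i₀) : ℕ) : ℝ) := by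
      by_cases hj₀W : j₀ ∈ W
      · rw [hpfeas.2.1 j₀ hj₀W, zero_mul]
        exact Nat.cast_nonneg _
      · have hmem : j₀ ∈ Finset.univ \ W := Finset.mem_sdiff.2 ⟨mem_univ _, hj₀W⟩
        have hle : (sw i₀ j₀ : ℝ) ≤ (((Finset.univ \ W).sup (sw i₀) : ℕ) : ℝ) := by
          exact_mod_cast Nat.cast_le.2 (Finset.le_sup hmem)
        nlinarith [(hpfeas.1 j₀).1, (hpfeas.1 j₀).2,
          (Nat.cast_nonneg (sw i₀ j₀) : (0:ℝ) ≤ sw i₀ j₀)]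
    have := hpfeas.2.2
    rw [hsum] at this
    linarith
  obtain ⟨x, hxW, hpx⟩ := hx
  refine ⟨x, hxW, ?_⟩
  -- per-district residual decrease
  have hdec : ∀ i, resid c (sw i) (f i) (insert x W) ≤ resid c (sw i) (f i) W := by
    intro i
    obtain ⟨q, hqfeas, hqcost, -⟩ := hwit i W (hfeas i W)
    have h1 := resid_le_cost c (sw i) (f i) (insert x W) hc
      (update_feasible (sw i) (f i) hxW hqfeas)
    rw [sum_update_zero] at h1
    have : 0 ≤ q x * c x := mul_nonneg (hqfeas.1 x).1 (hc x)
    linarith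
  have hdec₀ : resid c (sw i₀) (f i₀) (insert x W) ≤ resid c (sw i₀) (f i₀) W - c x := by
    have h1 := resid_le_cost c (sw i₀) (f i₀) (insert x W) hc
      (update_feasible (sw i₀) (f i₀) hxW hpfeas)
    rw [sum_update_zero, hpx, one_mul, hpcost] at h1
    linarith
  -- sum up
  rw [coverTot, coverTot]
  have key : c x ≤ ∑ i, (resid c (sw i) (f i) W - resid c (sw i) (f i) (insert x W)) := by
    have h := Finset.single_le_sum
      (f := fun i => resid c (sw i) (f i) W - resid c (sw i) (f i) (insert x W))
      (fun i _ => sub_nonneg.2 (hdec i)) (mem_univ i₀)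
    linarith
  simp only [Finset.sum_sub_distrib] at key ⊢
  linarith
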